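/- The billiards permutation of a generalized grid polygon has no fixed points and no 2-cycles; that is, every cycle of the billiards permutation has length at least 3. -/

import Mathlib

/-!
Formalization of generalized grid polygons (abstract simplicial complexes with a simplicial
map to the triangular grid) and their billiards permutations, following Defant–Jiradilok
and the paper "Triangular-Grid Billiards and Plabic Graphs".

Lattice coordinates: the pair `(a, b) : ℤ × ℤ` represents the planar point
`a•(1,0) + b•(1/2, √3/2)` of the triangular grid `T`.

A generalized grid polygon is encoded by a vertex count `n : ℕ`, a finite set
`F : Finset (Finset (Fin n))` of simplices (nonempty subsets of the vertex set), and a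
vertex map `f : Fin n → ℤ × ℤ` to the grid; the predicate `IsGGP` collects all the axioms.
-/

noncomputable section
open scoped Classical

/-- Lattice coordinates for vertices of the triangular grid. -/
abbrev GridV : Type := ℤ × ℤ

/-- A unit grid triangle.  An upward triangle with base point `v` has vertices
`v, v+(1,0), v+(0,1)`; a downward one has vertices `v+(1,0), v+(0,1), v+(1,1)`. -/
structure GCell where
  base : GridV
  up : Bool
deriving DecidableEq

def GCell.vertexSet (c : GCell) : Finset GridV :=
  if c.up then {c.base, c.base + (1, 0), c.base + (0, 1)}
  else {c.base + (1, 0), c.base + (0, 1), c.base + (1, 1)}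

/-- `s` is the vertex set of a 2-simplex (unit triangle) of the triangular grid. -/
def IsGridCellSet (s : Finset GridV) : Prop := ∃ c : GCell, s = c.vertexSet

/-- `s` is the vertex set of a 1-simplex (pane) of the triangular grid. -/
def IsGridPaneSet (s : Finset GridV) : Prop :=
  ∃ v : GridV, s = {v, v + (1, 0)} ∨ s = {v, v + (0, 1)} ∨ s = {v, v + (-1, 1)}

variable {n : ℕ}

/-- The 2-simplices of the complex. -/
def faces2 (F : Finset (Finset (Fin n))) : Finset (Finset (Fin n)) :=
  F.filter fun t => t.card = 3

/-- A 1-simplex lying on the boundary: it is contained in exactly one 2-simplex. -/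
def isBoundaryEdge (F : Finset (Finset (Fin n))) (s : Finset (Fin n)) : Prop :=
  s ∈ F ∧ s.card = 2 ∧ ((faces2 F).filter fun t => s ⊆ t).card = 1

/-- A 1-simplex not on the boundary. -/
def isInteriorEdge (F : Finset (Finset (Fin n))) (s : Finset (Fin n)) : Prop :=
  s ∈ F ∧ s.card = 2 ∧ 2 ≤ ((faces2 F).filter fun t => s ⊆ t).card

/-- An interior vertex: a vertex not contained in any boundary 1-simplex. -/
def isInteriorVertex (F : Finset (Finset (Fin n))) (v : Fin n) : Prop :=
  ({v} : Finset (Fin n)) ∈ F ∧ ∀ s ∈ F, s.card = 2 → v ∈ s → ¬ isBoundaryEdge F s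

/-- The geometric realization of the finite abstract simplicial complex with simplex set `F`,
as a subspace of `Fin n → ℝ`: the convex combinations supported on a simplex. -/
def realization (F : Finset (Finset (Fin n))) : Set (Fin n → ℝ) :=
  {w | (∀ v, 0 ≤ w v) ∧ (∑ v, w v) = 1 ∧ (Finset.univ.filter fun v => w v ≠ 0) ∈ F}

/-- `X` is a wedge of (finitely many) closed disks glued along boundary points: it is covered
by closed subsets each homeomorphic to a closed disk, any two of which meet in at most one
point, and every such common point lies on the boundary circles of the corresponding disks. -/
def IsWedgeOfDisksAlongBoundary (X : Set (Fin n → ℝ)) : Prop :=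
  ∃ (k : ℕ) (D : Fin k → Set X),
    (∀ i, IsClosed (D i)) ∧ (⋃ i, D i) = Set.univ ∧
    (∀ i j, i ≠ j → (D i ∩ D j).Subsingleton) ∧
    (∀ i, ∃ φ : ↥(D i) ≃ₜ ↥(Metric.closedBall (0 : ℝ × ℝ) 1),
      ∀ j, j ≠ i → ∀ x, ∀ hx : x ∈ D i ∩ D j,
        ((φ ⟨x, hx.1⟩ : ℝ × ℝ) ∈ Metric.sphere (0 : ℝ × ℝ) 1))

/-- `(n, F, f)` is a generalized grid polygon:
`F` is a finite (nonempty) abstract simplicial complex of dimension 2, homogeneous,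
equipped with a dimension-preserving simplicial map `f` to the triangular grid, whose
geometric realization is a simply-connected wedge of disks along boundary points, in which
every interior vertex lies in exactly six 2-simplices and every interior 1-simplex lies in
exactly two 2-simplices whose grid images form a diamond (two distinct triangles sharing
the image pane). -/
def IsGGP (n : ℕ) (F : Finset (Finset (Fin n))) (f : Fin n → GridV) : Prop :=
  F.Nonempty ∧
  -- abstract simplicial complex: simplices are nonempty, downward closed
  (∀ s ∈ F, s.Nonempty) ∧
  (∀ s ∈ F, ∀ t, t ⊆ s → t.Nonempty → t ∈ F) ∧
  -- dimension 2, homogeneous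
  (∀ s ∈ F, s.card ≤ 3) ∧
  (∀ s ∈ F, ∃ t ∈ F, t.card = 3 ∧ s ⊆ t) ∧
  -- simplicial map preserving dimensions, sending simplices to grid simplices
  (∀ s ∈ F, (s.image f).card = s.card) ∧
  (∀ s ∈ F, s.card = 2 → IsGridPaneSet (s.image f)) ∧
  (∀ s ∈ F, s.card = 3 → IsGridCellSet (s.image f)) ∧
  -- (1) the geometric realization is a simply-connected wedge of disks along boundary points
  IsWedgeOfDisksAlongBoundary (realization F) ∧
  SimplyConnectedSpace ↥(realization F) ∧
  -- (3) each interior vertex is in exactly six 2-simplices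
  (∀ v : Fin n, isInteriorVertex F v → ((faces2 F).filter fun t => v ∈ t).card = 6) ∧
  -- (4) each interior 1-simplex is in exactly two 2-simplices with distinct grid images
  (∀ s ∈ F, s.card = 2 → ¬ isBoundaryEdge F s →
    ((faces2 F).filter fun t => s ⊆ t).card = 2 ∧
    ∀ t₁ ∈ faces2 F, ∀ t₂ ∈ faces2 F, s ⊆ t₁ → s ⊆ t₂ → t₁ ≠ t₂ → t₁.image f ≠ t₂.image f)

/-- The label of a 1-simplex: `0` if its grid image is horizontal (0° with the positive
x-axis), `1` if at 60°, `2` if at 120°. -/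
def edgeLabel (f : Fin n → GridV) (s : Finset (Fin n)) : ZMod 3 :=
  if ∀ u ∈ s, ∀ v ∈ s, (f u - f v).2 = 0 then 0
  else if ∀ u ∈ s, ∀ v ∈ s, (f u - f v).1 = 0 then 1 else 2

/-- The grid image of the 2-simplex `t` is an upward-pointing triangle (such a triangle has a
unique coordinatewise-least vertex). -/
def isUpFace (f : Fin n → GridV) (t : Finset (Fin n)) : Prop :=
  ∃ v ∈ t, ∀ u ∈ t, f v ≤ f u

/-- The 1-simplex of the 2-simplex `t` through which a beam that entered `t` through the
1-simplex `s` exits: its label is one less (mod 3) than that of `s` if the image of `t` points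
upward, and one more if it points downward. -/
def exitEdge (f : Fin n → GridV) (t s : Finset (Fin n)) : Finset (Fin n) :=
  if h : ∃ s', s' ⊆ t ∧ s'.card = 2 ∧
      edgeLabel f s' = (if isUpFace f t then edgeLabel f s - 1 else edgeLabel f s + 1)
  then h.choose else ∅

/-- The other 2-simplex containing the 1-simplex `s` (besides `t`). -/
def otherFace (F : Finset (Finset (Fin n))) (s t : Finset (Fin n)) : Finset (Fin n) :=
  if h : ∃ t', t' ∈ faces2 F ∧ s ⊆ t' ∧ t' ≠ t then h.choose else t

/-- Some 2-simplex containing the 1-simplex `s` (unique when `s` is a boundary 1-simplex). -/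
def faceOf (F : Finset (Finset (Fin n))) (s : Finset (Fin n)) : Finset (Fin n) :=
  if h : ∃ t, t ∈ faces2 F ∧ s ⊆ t then h.choose else ∅

/-- The boundary 1-simplices. -/
def boundaryEdges (F : Finset (Finset (Fin n))) : Finset (Finset (Fin n)) :=
  F.filter fun s => isBoundaryEdge F s

/-- The perimeter: the number of boundary 1-simplices. -/
def gPerim (F : Finset (Finset (Fin n))) : ℕ := (boundaryEdges F).card

/-- The area: the number of 2-simplices. -/
def gArea (F : Finset (Finset (Fin n))) : ℕ := (faces2 F).card

/-- One step of the billiards process.  A state `(s, t)` records that the beam has just crossed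
(or been emitted from, or reflected at) the 1-simplex `s` heading into the 2-simplex `t`.
The beam exits `t` through `exitEdge f t s`; if that 1-simplex is on the boundary the beam
reflects back into `t`, otherwise it crosses into the other 2-simplex containing it. -/
def gStep (F : Finset (Finset (Fin n))) (f : Fin n → GridV)
    (st : Finset (Fin n) × Finset (Fin n)) : Finset (Fin n) × Finset (Fin n) :=
  let s' := exitEdge f st.2 st.1
  if isBoundaryEdge F s' then (s', st.2) else (s', otherFace F s' st.2)

/-- `gBeamTo F f b b'` : the beam emitted from the boundary 1-simplex `b` next reaches the
boundary at the 1-simplex `b'`. -/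
def gBeamTo (F : Finset (Finset (Fin n))) (f : Fin n → GridV) (b b' : Finset (Fin n)) : Prop :=
  ∃ k : ℕ, 0 < k ∧ isBoundaryEdge F b' ∧ ((gStep F f)^[k] (b, faceOf F b)).1 = b' ∧
    ∀ m : ℕ, 0 < m → m < k → ¬ isBoundaryEdge F (((gStep F f)^[m] (b, faceOf F b)).1)

/-- `π` is the billiards permutation of the generalized grid polygon `(n, F, f)`. -/
def gIsBilliards (F : Finset (Finset (Fin n))) (f : Fin n → GridV)
    (π : Equiv.Perm ↥(boundaryEdges F)) : Prop :=
  ∀ b : ↥(boundaryEdges F), gBeamTo F f b.1 (π b).1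

/-- The orbits (cycles) of a permutation of a finite type, as a finite set of finite sets. -/
def permOrbits {α : Type*} [Fintype α] [DecidableEq α] (π : Equiv.Perm α) :
    Finset (Finset α) :=
  Finset.univ.image fun a => Finset.univ.filter fun b => π.SameCycle a b

/-- The number of cycles of a permutation; for a billiards permutation this is the number of
distinct light-beam trajectories. -/
def cycCount {α : Type*} [Fintype α] [DecidableEq α] (π : Equiv.Perm α) : ℕ :=
  (permOrbits π).card

/-- Two 2-simplices are adjacent when they share a 1-simplex. -/
def dualAdj (F : Finset (Finset (Fin n))) (t t' : Finset (Fin n)) : Prop :=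
  t ≠ t' ∧ ∃ s ∈ F, s.card = 2 ∧ s ⊆ t ∧ s ⊆ t'

/-- The dual adjacency graph on the 2-simplices. -/
def dualGraph (F : Finset (Finset (Fin n))) : SimpleGraph ↥(faces2 F) where
  Adj t t' := dualAdj F t.1 t'.1
  symm := by
    constructor
    rintro a b ⟨hne, s, hs, hc, h1, h2⟩
    exact ⟨hne.symm, s, hs, hc, h2, h1⟩
  loopless := by constructor; rintro a ⟨hne, -⟩; exact hne rfl

/-- The number of components of a generalized grid polygon: since the polygon is a wedge of
disks along boundary points, its (indecomposable) components are exactly the connected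
components of the dual adjacency graph on 2-simplices. -/
def comps (F : Finset (Finset (Fin n))) : ℕ :=
  (Finset.univ.image fun t : ↥(faces2 F) =>
    Finset.univ.filter fun t' => (dualGraph F).Reachable t t').card

/-- The dual adjacency graph with the gluings across the 1-simplex `s₀` removed. -/
def dualGraphAvoid (F : Finset (Finset (Fin n))) (s₀ : Finset (Fin n)) :
    SimpleGraph ↥(faces2 F) where
  Adj t t' := t.1 ≠ t'.1 ∧ ∃ s ∈ F, s ≠ s₀ ∧ s.card = 2 ∧ s ⊆ t.1 ∧ s ⊆ t'.1
  symm := by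
    constructor
    rintro a b ⟨hne, s, hs, hs0, hc, h1, h2⟩
    exact ⟨hne.symm, s, hs, hs0, hc, h2, h1⟩
  loopless := by constructor; rintro a ⟨hne, -⟩; exact hne rfl

/-- Primitivity: no interior 1-simplex disconnects the polygon (cutting along any interior
1-simplex does not change which 2-simplices can reach which). -/
def gPrimitive (F : Finset (Finset (Fin n))) : Prop :=
  ∀ s₀ : Finset (Fin n), isInteriorEdge F s₀ →
    ∀ t t' : ↥(faces2 F),
      (dualGraphAvoid F s₀).Reachable t t' ↔ (dualGraph F).Reachable t t'

/-- The direction, in lattice coordinates, of the clockwise traversal (interior on the right)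
of the edge labeled `i` of an upward grid triangle.  For a downward triangle the direction is
the negative. -/
def cwDirUp (i : ZMod 3) : GridV :=
  if i = 0 then (-1, 0) else if i = 1 then (0, 1) else (1, -1)

/-- The image of a boundary 1-simplex as an oriented pane `(tail, head)` of the grid, oriented
so that the interior of the polygon lies on its right. -/
def orientedPane (F : Finset (Finset (Fin n))) (f : Fin n → GridV) (s : Finset (Fin n)) :
    GridV × GridV :=
  let d : GridV :=
    if isUpFace f (faceOf F s) then cwDirUp (edgeLabel f s) else - cwDirUp (edgeLabel f s)
  if h : ∃ x, x ∈ s.image f ∧ x + d ∈ s.image f then (h.choose, h.choose + d)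
  else ((0, 0), (0, 0))

/-- `e` enumerates the boundary 1-simplices as a loop of panes `(b_1, …, b_N)`: consecutive
oriented panes are head-to-tail (indices mod `N`). -/
def IsBoundaryLoop (F : Finset (Finset (Fin n))) (f : Fin n → GridV) (N : ℕ)
    (e : Fin N ≃ ↥(boundaryEdges F)) : Prop :=
  ∀ i : Fin N,
    (orientedPane F f (e i).1).2 =
      (orientedPane F f (e ⟨(i.1 + 1) % N, Nat.mod_lt _ i.pos⟩).1).1

/-- The beam emitted from the boundary 1-simplex `b` crosses (or reflects at, or is emitted
from) the 1-simplex `s` at some time. -/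
def Crosses (F : Finset (Finset (Fin n))) (f : Fin n → GridV) (b s : Finset (Fin n)) : Prop :=
  ∃ k : ℕ, ((gStep F f)^[k] (b, faceOf F b)).1 = s

/-- The graph distance between two vertices of the triangular grid. -/
def gridDist (u v : GridV) : ℕ :=
  max (max (u.1 - v.1).natAbs (u.2 - v.2).natAbs) ((u.1 - v.1) + (u.2 - v.2)).natAbs

/-- The set of 1-simplices traversed by a combinatorial path `p` of vertices. -/
def cutPathEdges (ℓ : ℕ) (p : Fin (ℓ + 1) → Fin n) : Finset (Finset (Fin n)) :=
  Finset.univ.image fun i : Fin ℓ => ({p i.castSucc, p i.succ} : Finset (Fin n))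

/-- `p` is an interior path whose grid image is a *shortest* grid path and each of whose
1-simplices is crossed only by the beams of the cycles constituting `B`. -/
def IsCutPath (F : Finset (Finset (Fin n))) (f : Fin n → GridV)
    (B : Finset ↥(boundaryEdges F)) (ℓ : ℕ) (p : Fin (ℓ + 1) → Fin n) : Prop :=
  Function.Injective p ∧
  (∀ i : Fin ℓ, isInteriorEdge F ({p i.castSucc, p i.succ} : Finset (Fin n))) ∧
  (∀ i : Fin ℓ, ∀ b : ↥(boundaryEdges F),
    Crosses F f b.1 ({p i.castSucc, p i.succ} : Finset (Fin n)) → b ∈ B) ∧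
  ℓ = gridDist (f (p 0)) (f (p (Fin.last ℓ)))


/-! ### Auxiliary material for the proof -/

section Aux

variable {n : ℕ}

lemma pair_subset_triple {α : Type*} [DecidableEq α] {x y z : α} {s : Finset α}
    (hs : s ⊆ {x, y, z}) (h2 : s.card = 2) :
    s = {x, y} ∨ s = {x, z} ∨ s = {y, z} := by
  obtain ⟨a, b, hab, rfl⟩ := Finset.card_eq_two.mp h2
  have ha : a ∈ ({x, y, z} : Finset α) := hs (by simp)
  have hb : b ∈ ({x, y, z} : Finset α) := hs (by simp)
  simp only [Finset.mem_insert, Finset.mem_singleton] at ha hb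
  rcases ha with rfl | rfl | rfl <;> rcases hb with rfl | rfl | rfl <;>
    first
      | exact absurd rfl hab
      | exact Or.inl rfl
      | exact Or.inl (Finset.pair_comm _ _)
      | exact Or.inr (Or.inl rfl)
      | exact Or.inr (Or.inl (Finset.pair_comm _ _))
      | exact Or.inr (Or.inr rfl)
      | exact Or.inr (Or.inr (Finset.pair_comm _ _))

lemma edgeLabel_zero (f : Fin n → GridV) {x y : Fin n} (h : (f x).2 = (f y).2) :
    edgeLabel f {x, y} = 0 := by
  unfold edgeLabel
  rw [if_pos]
  intro u hu v hv
  simp only [Finset.mem_insert, Finset.mem_singleton] at hu hv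
  rcases hu with rfl | rfl <;> rcases hv with rfl | rfl <;>
    simp only [Prod.snd_sub] <;> omega

lemma edgeLabel_one (f : Fin n → GridV) {x y : Fin n}
    (h1 : (f x).1 = (f y).1) (h2 : (f x).2 ≠ (f y).2) :
    edgeLabel f {x, y} = 1 := by
  unfold edgeLabel
  rw [if_neg, if_pos]
  · intro u hu v hv
    simp only [Finset.mem_insert, Finset.mem_singleton] at hu hv
    rcases hu with rfl | rfl <;> rcases hv with rfl | rfl <;>
      simp only [Prod.fst_sub] <;> omega
  · intro hall
    have := hall x (by simp) y (by simp)
    rw [Prod.snd_sub] at this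
    omega

lemma edgeLabel_two (f : Fin n → GridV) {x y : Fin n}
    (h1 : (f x).1 ≠ (f y).1) (h2 : (f x).2 ≠ (f y).2) :
    edgeLabel f {x, y} = 2 := by
  unfold edgeLabel
  rw [if_neg, if_neg]
  · intro hall
    have := hall x (by simp) y (by simp)
    rw [Prod.fst_sub] at this
    omega
  · intro hall
    have := hall x (by simp) y (by simp)
    rw [Prod.snd_sub] at this
    omega

lemma face_structure {F : Finset (Finset (Fin n))} {f : Fin n → GridV} (hP : IsGGP n F f)
    {t : Finset (Fin n)} (ht : t ∈ faces2 F) :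
    ∃ x y z : Fin n, t = {x, y, z} ∧ x ≠ y ∧ x ≠ z ∧ y ≠ z ∧
      ∃ v : GridV,
        ((f x = v ∧ f y = v + (1, 0) ∧ f z = v + (0, 1)) ∧ isUpFace f t) ∨
        ((f x = v + (1, 0) ∧ f y = v + (0, 1) ∧ f z = v + (1, 1)) ∧ ¬ isUpFace f t) := by
  obtain ⟨htF, ht3⟩ := Finset.mem_filter.mp ht
  obtain ⟨c, hc⟩ := hP.2.2.2.2.2.2.2.1 t htF ht3
  rcases hcu : c.up with hfalse | htrue
  · -- downward triangle
    set v := c.base with hv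
    have hc' : t.image f = {v + ((1:ℤ), (0:ℤ)), v + (0, 1), v + (1, 1)} := by
      rw [hc]; unfold GCell.vertexSet; rw [if_neg (by rw [hcu]; simp)]
    obtain ⟨x, hx, hfx⟩ := Finset.mem_image.mp (by rw [hc']; simp :
      v + ((1:ℤ), (0:ℤ)) ∈ t.image f)
    obtain ⟨y, hy, hfy⟩ := Finset.mem_image.mp (by rw [hc']; simp :
      v + ((0:ℤ), (1:ℤ)) ∈ t.image f)
    obtain ⟨z, hz, hfz⟩ := Finset.mem_image.mp (by rw [hc']; simp :
      v + ((1:ℤ), (1:ℤ)) ∈ t.image f)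
    have hxy : x ≠ y := by
      intro h; rw [h, hfy] at hfx
      have := congrArg Prod.fst hfx; simp [Prod.fst_add] at this
    have hxz : x ≠ z := by
      intro h; rw [h, hfz] at hfx
      have := congrArg Prod.snd hfx; simp [Prod.snd_add] at this
    have hyz : y ≠ z := by
      intro h; rw [h, hfz] at hfy
      have := congrArg Prod.fst hfy; simp [Prod.fst_add] at this
    have hsub : ({x, y, z} : Finset (Fin n)) ⊆ t := by
      intro u hu
      simp only [Finset.mem_insert, Finset.mem_singleton] at hu
      rcases hu with rfl | rfl | rfl <;> assumption
    have hteq : t = {x, y, z} := by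
      refine (Finset.eq_of_subset_of_card_le hsub ?_).symm
      rw [ht3, Finset.card_eq_three.mpr ⟨x, y, z, hxy, hxz, hyz, rfl⟩]
    refine ⟨x, y, z, hteq, hxy, hxz, hyz, v, Or.inr ⟨⟨hfx, hfy, hfz⟩, ?_⟩⟩
    rintro ⟨u, hu, hle⟩
    rw [hteq] at hu
    simp only [Finset.mem_insert, Finset.mem_singleton] at hu
    rcases hu with rfl | rfl | rfl
    · have := hle y (by rw [hteq]; simp)
      rw [hfx, hfy, Prod.le_def] at this
      simp only [Prod.fst_add, Prod.snd_add] at this; omega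
    · have := hle x (by rw [hteq]; simp)
      rw [hfx, hfy, Prod.le_def] at this
      simp only [Prod.fst_add, Prod.snd_add] at this; omega
    · have := hle x (by rw [hteq]; simp)
      rw [hfx, hfz, Prod.le_def] at this
      simp only [Prod.fst_add, Prod.snd_add] at this; omega
  · -- upward triangle
    set v := c.base with hv
    have hc' : t.image f = {v, v + ((1:ℤ), (0:ℤ)), v + (0, 1)} := by
      rw [hc]; unfold GCell.vertexSet; rw [if_pos (by rw [hcu])]
    obtain ⟨x, hx, hfx⟩ := Finset.mem_image.mp (by rw [hc']; simp : v ∈ t.image f)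
    obtain ⟨y, hy, hfy⟩ := Finset.mem_image.mp (by rw [hc']; simp :
      v + ((1:ℤ), (0:ℤ)) ∈ t.image f)
    obtain ⟨z, hz, hfz⟩ := Finset.mem_image.mp (by rw [hc']; simp :
      v + ((0:ℤ), (1:ℤ)) ∈ t.image f)
    have hxy : x ≠ y := by
      intro h; rw [h, hfy] at hfx
      have := congrArg Prod.fst hfx; simp [Prod.fst_add] at this
    have hxz : x ≠ z := by
      intro h; rw [h, hfz] at hfx
      have := congrArg Prod.snd hfx; simp [Prod.snd_add] at this
    have hyz : y ≠ z := by
      intro h; rw [h, hfz] at hfy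
      have := congrArg Prod.fst hfy; simp [Prod.fst_add] at this
    have hsub : ({x, y, z} : Finset (Fin n)) ⊆ t := by
      intro u hu
      simp only [Finset.mem_insert, Finset.mem_singleton] at hu
      rcases hu with rfl | rfl | rfl <;> assumption
    have hteq : t = {x, y, z} := by
      refine (Finset.eq_of_subset_of_card_le hsub ?_).symm
      rw [ht3, Finset.card_eq_three.mpr ⟨x, y, z, hxy, hxz, hyz, rfl⟩]
    refine ⟨x, y, z, hteq, hxy, hxz, hyz, v, Or.inl ⟨⟨hfx, hfy, hfz⟩, x, hsub (by simp), ?_⟩⟩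
    intro u hu
    rw [hteq] at hu
    simp only [Finset.mem_insert, Finset.mem_singleton] at hu
    rcases hu with rfl | rfl | rfl
    · exact le_refl _
    · rw [hfx, hfy, Prod.le_def]
      simp only [Prod.fst_add, Prod.snd_add]; omega
    · rw [hfx, hfz, Prod.le_def]
      simp only [Prod.fst_add, Prod.snd_add]; omega

/-- Third-vertex offset table for upward faces. -/
def TU (i : ZMod 3) : GridV :=
  if i = 0 then (-1, 2) else if i = 1 then (2, -1) else (-1, -1)

/-- Third-vertex offset table for downward faces. -/
def TD (i : ZMod 3) : GridV :=
  if i = 0 then (1, -2) else if i = 1 then (-2, 1) else (1, 1)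

lemma exitEdge_eq {f : Fin n → GridV} {t s p : Finset (Fin n)} {L : ZMod 3}
    (hL : (if isUpFace f t then edgeLabel f s - 1 else edgeLabel f s + 1) = L)
    (hpt : p ⊆ t) (hp2 : p.card = 2) (hpl : edgeLabel f p = L)
    (huniq : ∀ q, q ⊆ t → q.card = 2 → edgeLabel f q = L → q = p) :
    exitEdge f t s = p := by
  have hEx : ∃ s', s' ⊆ t ∧ s'.card = 2 ∧
      edgeLabel f s' = (if isUpFace f t then edgeLabel f s - 1 else edgeLabel f s + 1) :=
    ⟨p, hpt, hp2, by rw [hL, hpl]⟩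
  unfold exitEdge
  rw [dif_pos hEx]
  obtain ⟨h1, h2, h3⟩ := hEx.choose_spec
  exact huniq _ h1 h2 (by rw [h3, hL])

lemma face_step {F : Finset (Finset (Fin n))} {f : Fin n → GridV} (hP : IsGGP n F f)
    {t s : Finset (Fin n)} (ht : t ∈ faces2 F) (hst : s ⊆ t) (hs2 : s.card = 2) :
    (exitEdge f t s ⊆ t ∧ (exitEdge f t s).card = 2 ∧ exitEdge f t s ≠ s ∧
      edgeLabel f (exitEdge f t s) =
        (if isUpFace f t then edgeLabel f s - 1 else edgeLabel f s + 1) ∧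
      (∑ u ∈ exitEdge f t s, f u) = (∑ u ∈ s, f u) +
        cwDirUp (edgeLabel f s + if isUpFace f t then 1 else 2)) ∧
    (∀ w ∈ t, w ∉ s → f w + f w = (∑ u ∈ s, f u) +
      (if isUpFace f t then TU (edgeLabel f s) else TD (edgeLabel f s))) := by
  obtain ⟨x, y, z, hteq, hxy, hxz, hyz, v, hcase⟩ := face_structure hP ht
  have pxy : ({x, y} : Finset (Fin n)) ⊆ t := by
    rw [hteq]; intro a ha
    simp only [Finset.mem_insert, Finset.mem_singleton] at ha ⊢; tauto
  have pxz : ({x, z} : Finset (Fin n)) ⊆ t := by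
    rw [hteq]; intro a ha
    simp only [Finset.mem_insert, Finset.mem_singleton] at ha ⊢; tauto
  have pyz : ({y, z} : Finset (Fin n)) ⊆ t := by
    rw [hteq]; intro a ha
    simp only [Finset.mem_insert, Finset.mem_singleton] at ha ⊢; tauto
  have cxy : ({x, y} : Finset (Fin n)).card = 2 := Finset.card_pair hxy
  have cxz : ({x, z} : Finset (Fin n)).card = 2 := Finset.card_pair hxz
  have cyz : ({y, z} : Finset (Fin n)).card = 2 := Finset.card_pair hyz
  have sxy : (∑ u ∈ ({x, y} : Finset (Fin n)), f u) = f x + f y := Finset.sum_pair hxy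
  have sxz : (∑ u ∈ ({x, z} : Finset (Fin n)), f u) = f x + f z := Finset.sum_pair hxz
  have syz : (∑ u ∈ ({y, z} : Finset (Fin n)), f u) = f y + f z := Finset.sum_pair hyz
  rcases hcase with ⟨⟨hfx, hfy, hfz⟩, hup⟩ | ⟨⟨hfx, hfy, hfz⟩, hup⟩
  · -- upward face
    have l0 : edgeLabel f {x, y} = 0 := by
      apply edgeLabel_zero; rw [hfx, hfy]; simp
    have l1 : edgeLabel f {x, z} = 1 := by
      apply edgeLabel_one <;> rw [hfx, hfz] <;> simp
    have l2 : edgeLabel f {y, z} = 2 := by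
      apply edgeLabel_two <;> rw [hfy, hfz] <;> simp
    rcases pair_subset_triple (hteq ▸ hst) hs2 with rfl | rfl | rfl
    · -- enter label 0, exit label 2
      have hex : exitEdge f t {x, y} = {y, z} := by
        refine exitEdge_eq (by rw [if_pos hup, l0]; decide) pyz cyz l2 ?_
        intro q hq hq2 hql
        rcases pair_subset_triple (hteq ▸ hq) hq2 with rfl | rfl | rfl
        · rw [l0] at hql; exact absurd hql (by decide)
        · rw [l1] at hql; exact absurd hql (by decide)
        · rfl
      constructor
      · rw [hex]
        refine ⟨pyz, cyz, ?_, ?_, ?_⟩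
        · intro h; rw [h, l0] at l2; exact absurd l2 (by decide)
        · rw [if_pos hup, l2, l0]; decide
        · rw [if_pos hup, l0, syz, sxy, hfx, hfy, hfz,
            show cwDirUp ((0 : ZMod 3) + 1) = ((0 : ℤ), (1 : ℤ)) from by decide]
          rw [Prod.ext_iff]
          simp only [Prod.fst_add, Prod.snd_add]; omega
      · intro w hw hws
        rw [hteq] at hw
        simp only [Finset.mem_insert, Finset.mem_singleton] at hw
        have hwz : w = z := by
          rcases hw with rfl | rfl | rfl
          · exact absurd (by simp) hws
          · exact absurd (by simp) hws
          · rfl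
        subst hwz
        rw [if_pos hup, l0, sxy, hfx, hfy, hfz,
          show TU 0 = ((-1 : ℤ), (2 : ℤ)) from by decide]
        rw [Prod.ext_iff]
        simp only [Prod.fst_add, Prod.snd_add]; omega
    · -- enter label 1, exit label 0
      have hex : exitEdge f t {x, z} = {x, y} := by
        refine exitEdge_eq (by rw [if_pos hup, l1]; decide) pxy cxy l0 ?_
        intro q hq hq2 hql
        rcases pair_subset_triple (hteq ▸ hq) hq2 with rfl | rfl | rfl
        · rfl
        · rw [l1] at hql; exact absurd hql (by decide)
        · rw [l2] at hql; exact absurd hql (by decide)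
      constructor
      · rw [hex]
        refine ⟨pxy, cxy, ?_, ?_, ?_⟩
        · intro h; rw [h, l1] at l0; exact absurd l0 (by decide)
        · rw [if_pos hup, l0, l1]; decide
        · rw [if_pos hup, l1, sxy, sxz, hfx, hfy, hfz,
            show cwDirUp ((1 : ZMod 3) + 1) = ((1 : ℤ), (-1 : ℤ)) from by decide]
          rw [Prod.ext_iff]
          simp only [Prod.fst_add, Prod.snd_add]; omega
      · intro w hw hws
        rw [hteq] at hw
        simp only [Finset.mem_insert, Finset.mem_singleton] at hw
        have hwy : w = y := by
          rcases hw with rfl | rfl | rfl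
          · exact absurd (by simp) hws
          · rfl
          · exact absurd (by simp) hws
        subst hwy
        rw [if_pos hup, l1, sxz, hfx, hfy, hfz,
          show TU 1 = ((2 : ℤ), (-1 : ℤ)) from by decide]
        rw [Prod.ext_iff]
        simp only [Prod.fst_add, Prod.snd_add]; omega
    · -- enter label 2, exit label 1
      have hex : exitEdge f t {y, z} = {x, z} := by
        refine exitEdge_eq (by rw [if_pos hup, l2]; decide) pxz cxz l1 ?_
        intro q hq hq2 hql
        rcases pair_subset_triple (hteq ▸ hq) hq2 with rfl | rfl | rfl
        · rw [l0] at hql; exact absurd hql (by decide)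
        · rfl
        · rw [l2] at hql; exact absurd hql (by decide)
      constructor
      · rw [hex]
        refine ⟨pxz, cxz, ?_, ?_, ?_⟩
        · intro h; rw [h, l2] at l1; exact absurd l1 (by decide)
        · rw [if_pos hup, l1, l2]; decide
        · rw [if_pos hup, l2, sxz, syz, hfx, hfy, hfz,
            show cwDirUp ((2 : ZMod 3) + 1) = ((-1 : ℤ), (0 : ℤ)) from by decide]
          rw [Prod.ext_iff]
          simp only [Prod.fst_add, Prod.snd_add]; omega
      · intro w hw hws
        rw [hteq] at hw
        simp only [Finset.mem_insert, Finset.mem_singleton] at hw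
        have hwx : w = x := by
          rcases hw with rfl | rfl | rfl
          · rfl
          · exact absurd (by simp) hws
          · exact absurd (by simp) hws
        subst hwx
        rw [if_pos hup, l2, syz, hfx, hfy, hfz,
          show TU 2 = ((-1 : ℤ), (-1 : ℤ)) from by decide]
        rw [Prod.ext_iff]
        simp only [Prod.fst_add, Prod.snd_add]; omega
  · -- downward face
    have l2 : edgeLabel f {x, y} = 2 := by
      apply edgeLabel_two <;> rw [hfx, hfy] <;> simp
    have l1 : edgeLabel f {x, z} = 1 := by
      apply edgeLabel_one <;> rw [hfx, hfz] <;> simp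
    have l0 : edgeLabel f {y, z} = 0 := by
      apply edgeLabel_zero; rw [hfy, hfz]; simp
    rcases pair_subset_triple (hteq ▸ hst) hs2 with rfl | rfl | rfl
    · -- enter label 2, exit label 0
      have hex : exitEdge f t {x, y} = {y, z} := by
        refine exitEdge_eq (by rw [if_neg hup, l2]; decide) pyz cyz l0 ?_
        intro q hq hq2 hql
        rcases pair_subset_triple (hteq ▸ hq) hq2 with rfl | rfl | rfl
        · rw [l2] at hql; exact absurd hql (by decide)
        · rw [l1] at hql; exact absurd hql (by decide)
        · rfl
      constructor
      · rw [hex]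
        refine ⟨pyz, cyz, ?_, ?_, ?_⟩
        · intro h; rw [h, l2] at l0; exact absurd l0 (by decide)
        · rw [if_neg hup, l0, l2]; decide
        · rw [if_neg hup, l2, syz, sxy, hfx, hfy, hfz,
            show cwDirUp ((2 : ZMod 3) + 2) = ((0 : ℤ), (1 : ℤ)) from by decide]
          rw [Prod.ext_iff]
          simp only [Prod.fst_add, Prod.snd_add]; omega
      · intro w hw hws
        rw [hteq] at hw
        simp only [Finset.mem_insert, Finset.mem_singleton] at hw
        have hwz : w = z := by
          rcases hw with rfl | rfl | rfl
          · exact absurd (by simp) hws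
          · exact absurd (by simp) hws
          · rfl
        subst hwz
        rw [if_neg hup, l2, sxy, hfx, hfy, hfz,
          show TD 2 = ((1 : ℤ), (1 : ℤ)) from by decide]
        rw [Prod.ext_iff]
        simp only [Prod.fst_add, Prod.snd_add]; omega
    · -- enter label 1, exit label 2
      have hex : exitEdge f t {x, z} = {x, y} := by
        refine exitEdge_eq (by rw [if_neg hup, l1]; decide) pxy cxy l2 ?_
        intro q hq hq2 hql
        rcases pair_subset_triple (hteq ▸ hq) hq2 with rfl | rfl | rfl
        · rfl
        · rw [l1] at hql; exact absurd hql (by decide)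
        · rw [l0] at hql; exact absurd hql (by decide)
      constructor
      · rw [hex]
        refine ⟨pxy, cxy, ?_, ?_, ?_⟩
        · intro h; rw [h, l1] at l2; exact absurd l2 (by decide)
        · rw [if_neg hup, l2, l1]; decide
        · rw [if_neg hup, l1, sxy, sxz, hfx, hfy, hfz,
            show cwDirUp ((1 : ZMod 3) + 2) = ((-1 : ℤ), (0 : ℤ)) from by decide]
          rw [Prod.ext_iff]
          simp only [Prod.fst_add, Prod.snd_add]; omega
      · intro w hw hws
        rw [hteq] at hw
        simp only [Finset.mem_insert, Finset.mem_singleton] at hw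
        have hwy : w = y := by
          rcases hw with rfl | rfl | rfl
          · exact absurd (by simp) hws
          · rfl
          · exact absurd (by simp) hws
        subst hwy
        rw [if_neg hup, l1, sxz, hfx, hfy, hfz,
          show TD 1 = ((-2 : ℤ), (1 : ℤ)) from by decide]
        rw [Prod.ext_iff]
        simp only [Prod.fst_add, Prod.snd_add]; omega
    · -- enter label 0, exit label 1
      have hex : exitEdge f t {y, z} = {x, z} := by
        refine exitEdge_eq (by rw [if_neg hup, l0]; decide) pxz cxz l1 ?_
        intro q hq hq2 hql
        rcases pair_subset_triple (hteq ▸ hq) hq2 with rfl | rfl | rfl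
        · rw [l2] at hql; exact absurd hql (by decide)
        · rfl
        · rw [l0] at hql; exact absurd hql (by decide)
      constructor
      · rw [hex]
        refine ⟨pxz, cxz, ?_, ?_, ?_⟩
        · intro h; rw [h, l0] at l1; exact absurd l1 (by decide)
        · rw [if_neg hup, l1, l0]; decide
        · rw [if_neg hup, l0, sxz, syz, hfx, hfy, hfz,
            show cwDirUp ((0 : ZMod 3) + 2) = ((1 : ℤ), (-1 : ℤ)) from by decide]
          rw [Prod.ext_iff]
          simp only [Prod.fst_add, Prod.snd_add]; omega
      · intro w hw hws
        rw [hteq] at hw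
        simp only [Finset.mem_insert, Finset.mem_singleton] at hw
        have hwx : w = x := by
          rcases hw with rfl | rfl | rfl
          · rfl
          · exact absurd (by simp) hws
          · exact absurd (by simp) hws
        subst hwx
        rw [if_neg hup, l0, syz, hfx, hfy, hfz,
          show TD 0 = ((1 : ℤ), (-2 : ℤ)) from by decide]
        rw [Prod.ext_iff]
        simp only [Prod.fst_add, Prod.snd_add]; omega

lemma faceOf_spec {F : Finset (Finset (Fin n))} {f : Fin n → GridV} (hP : IsGGP n F f)
    {s : Finset (Fin n)} (hs : s ∈ F) :
    faceOf F s ∈ faces2 F ∧ s ⊆ faceOf F s := by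
  have hEx : ∃ t, t ∈ faces2 F ∧ s ⊆ t := by
    obtain ⟨t, htF, ht3, hst⟩ := hP.2.2.2.2.1 s hs
    exact ⟨t, Finset.mem_filter.mpr ⟨htF, ht3⟩, hst⟩
  unfold faceOf
  rw [dif_pos hEx]
  exact hEx.choose_spec

lemma faceOf_boundary {F : Finset (Finset (Fin n))} {s t : Finset (Fin n)}
    (hb : isBoundaryEdge F s) (ht : t ∈ faces2 F) (hst : s ⊆ t) :
    faceOf F s = t := by
  obtain ⟨hsF, hs2, hcard⟩ := hb
  obtain ⟨u, hu⟩ := Finset.card_eq_one.mp hcard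
  have hEx : ∃ t', t' ∈ faces2 F ∧ s ⊆ t' := ⟨t, ht, hst⟩
  unfold faceOf
  rw [dif_pos hEx]
  have h1 : hEx.choose ∈ (faces2 F).filter (fun t' => s ⊆ t') :=
    Finset.mem_filter.mpr ⟨hEx.choose_spec.1, hEx.choose_spec.2⟩
  have h2 : t ∈ (faces2 F).filter (fun t' => s ⊆ t') := Finset.mem_filter.mpr ⟨ht, hst⟩
  rw [hu, Finset.mem_singleton] at h1 h2
  rw [h1, h2]

lemma cross_face {F : Finset (Finset (Fin n))} {f : Fin n → GridV} (hP : IsGGP n F f)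
    {s t : Finset (Fin n)} (hs : s ∈ F) (hs2 : s.card = 2)
    (hnb : ¬ isBoundaryEdge F s) (ht : t ∈ faces2 F) (hst : s ⊆ t) :
    otherFace F s t ∈ faces2 F ∧ s ⊆ otherFace F s t ∧ otherFace F s t ≠ t ∧
      (isUpFace f (otherFace F s t) ↔ ¬ isUpFace f t) := by
  obtain ⟨hc2, himg⟩ := hP.2.2.2.2.2.2.2.2.2.2.2 s hs hs2 hnb
  have htmem : t ∈ (faces2 F).filter (fun t' => s ⊆ t') := Finset.mem_filter.mpr ⟨ht, hst⟩
  obtain ⟨t', ht'mem, ht'ne⟩ := Finset.exists_mem_ne (by rw [hc2]; omega) t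
  obtain ⟨ht'f, hst'⟩ := Finset.mem_filter.mp ht'mem
  have hEx : ∃ t'', t'' ∈ faces2 F ∧ s ⊆ t'' ∧ t'' ≠ t := ⟨t', ht'f, hst', ht'ne⟩
  unfold otherFace
  rw [dif_pos hEx]
  obtain ⟨ho1, ho2, ho3⟩ := hEx.choose_spec
  refine ⟨ho1, ho2, ho3, ?_⟩
  have himgne : Finset.image f hEx.choose ≠ Finset.image f t :=
    himg hEx.choose ho1 t ht ho2 hst ho3
  have key : ∀ t₁, t₁ ∈ faces2 F → s ⊆ t₁ → ∀ t₂, t₂ ∈ faces2 F → s ⊆ t₂ →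
      (isUpFace f t₁ ↔ isUpFace f t₂) → Finset.image f t₁ = Finset.image f t₂ := by
    intro t₁ h₁ hs₁ t₂ h₂ hs₂ hiff
    obtain ⟨w₁, hw₁, hw₁s⟩ : ∃ w ∈ t₁, w ∉ s := by
      by_contra hcon
      push_neg at hcon
      have hle := Finset.card_le_card (fun a ha => hcon a ha)
      rw [(Finset.mem_filter.mp h₁).2, hs2] at hle
      omega
    obtain ⟨w₂, hw₂, hw₂s⟩ : ∃ w ∈ t₂, w ∉ s := by
      by_contra hcon
      push_neg at hcon
      have hle := Finset.card_le_card (fun a ha => hcon a ha)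
      rw [(Finset.mem_filter.mp h₂).2, hs2] at hle
      omega
    have e₁ := (face_step hP h₁ hs₁ hs2).2 w₁ hw₁ hw₁s
    have e₂ := (face_step hP h₂ hs₂ hs2).2 w₂ hw₂ hw₂s
    have hfw : f w₁ = f w₂ := by
      by_cases hu : isUpFace f t₁
      · rw [if_pos hu] at e₁
        rw [if_pos (hiff.mp hu)] at e₂
        have h12 := e₁.trans e₂.symm
        rw [Prod.ext_iff] at h12 ⊢
        simp only [Prod.fst_add, Prod.snd_add] at h12 ⊢
        omega
      · rw [if_neg hu] at e₁
        rw [if_neg (fun h => hu (hiff.mpr h))] at e₂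
        have h12 := e₁.trans e₂.symm
        rw [Prod.ext_iff] at h12 ⊢
        simp only [Prod.fst_add, Prod.snd_add] at h12 ⊢
        omega
    have ht₁ : t₁ = insert w₁ s := by
      refine (Finset.eq_of_subset_of_card_le (Finset.insert_subset hw₁ hs₁) ?_).symm
      rw [(Finset.mem_filter.mp h₁).2, Finset.card_insert_of_notMem hw₁s, hs2]
    have ht₂ : t₂ = insert w₂ s := by
      refine (Finset.eq_of_subset_of_card_le (Finset.insert_subset hw₂ hs₂) ?_).symm
      rw [(Finset.mem_filter.mp h₂).2, Finset.card_insert_of_notMem hw₂s, hs2]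
    rw [ht₁, ht₂, Finset.image_insert, Finset.image_insert, hfw]
  constructor
  · intro ho hut
    exact himgne (key hEx.choose ho1 ho2 t ht hst (iff_of_true ho hut))
  · intro hnut
    by_contra hno
    exact himgne (key hEx.choose ho1 ho2 t ht hst (iff_of_false hno hnut))

/-- The grid displacement of `m` billiard steps in direction `D`. -/
def stepsVec (m : ℕ) (D : GridV) : GridV := ((m : ℤ) * D.1, (m : ℤ) * D.2)

lemma stepsVec_zero (D : GridV) : stepsVec 0 D = 0 := by
  simp [stepsVec, Prod.ext_iff]

lemma stepsVec_succ (m : ℕ) (D : GridV) : stepsVec (m + 1) D = stepsVec m D + D := by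
  rw [Prod.ext_iff]
  simp only [stepsVec, Prod.fst_add, Prod.snd_add]
  constructor <;> push_cast <;> ring

/-- The direction index of the beam entering the polygon at the 1-simplex `s`. -/
def dirIdx (F : Finset (Finset (Fin n))) (f : Fin n → GridV) (s : Finset (Fin n)) : ZMod 3 :=
  edgeLabel f s + if isUpFace f (faceOf F s) then 1 else 2

lemma gStep_fst (F : Finset (Finset (Fin n))) (f : Fin n → GridV)
    (st : Finset (Fin n) × Finset (Fin n)) :
    (gStep F f st).1 = exitEdge f st.2 st.1 := by
  simp only [gStep]
  split <;> rfl

lemma gStep_snd_not_boundary {F : Finset (Finset (Fin n))} {f : Fin n → GridV}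
    {st : Finset (Fin n) × Finset (Fin n)}
    (h : ¬ isBoundaryEdge F (exitEdge f st.2 st.1)) :
    (gStep F f st).2 = otherFace F (exitEdge f st.2 st.1) st.2 := by
  simp only [gStep]
  rw [if_neg h]

lemma beam_inv {F : Finset (Finset (Fin n))} {f : Fin n → GridV} (hP : IsGGP n F f)
    {b : Finset (Fin n)} (hb : isBoundaryEdge F b) :
    ∀ m : ℕ,
      (∀ j, 0 < j → j ≤ m → ¬ isBoundaryEdge F (((gStep F f)^[j] (b, faceOf F b)).1)) →
      ((gStep F f)^[m] (b, faceOf F b)).1 ∈ F ∧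
      (((gStep F f)^[m] (b, faceOf F b)).1).card = 2 ∧
      ((gStep F f)^[m] (b, faceOf F b)).2 ∈ faces2 F ∧
      ((gStep F f)^[m] (b, faceOf F b)).1 ⊆ ((gStep F f)^[m] (b, faceOf F b)).2 ∧
      (∑ u ∈ ((gStep F f)^[m] (b, faceOf F b)).1, f u) =
        (∑ u ∈ b, f u) + stepsVec m (cwDirUp (dirIdx F f b)) ∧
      edgeLabel f ((gStep F f)^[m] (b, faceOf F b)).1 +
        (if isUpFace f ((gStep F f)^[m] (b, faceOf F b)).2 then 1 else 2) = dirIdx F f b := by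
  intro m
  induction m with
  | zero =>
    intro _
    simp only [Function.iterate_zero_apply]
    obtain ⟨hf1, hf2⟩ := faceOf_spec hP hb.1
    exact ⟨hb.1, hb.2.1, hf1, hf2, by rw [stepsVec_zero, add_zero], rfl⟩
  | succ m ih =>
    intro hj
    obtain ⟨hsF, hs2, htF, hst, hsum, hdir⟩ :=
      ih (fun j h1 h2 => hj j h1 (h2.trans (Nat.le_succ m)))
    obtain ⟨⟨hsub', hcard', hne', hlab', hsum'⟩, -⟩ := face_step hP htF hst hs2
    have hnb : ¬ isBoundaryEdge F
        (exitEdge f ((gStep F f)^[m] (b, faceOf F b)).2 ((gStep F f)^[m] (b, faceOf F b)).1) := by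
      have h := hj (m + 1) (Nat.succ_pos m) le_rfl
      rwa [Function.iterate_succ_apply', gStep_fst] at h
    have hs'F : exitEdge f ((gStep F f)^[m] (b, faceOf F b)).2
        ((gStep F f)^[m] (b, faceOf F b)).1 ∈ F := by
      refine hP.2.2.1 _ (Finset.mem_filter.mp htF).1 _ hsub' ?_
      rw [← Finset.card_pos, hcard']
      omega
    obtain ⟨ho1, ho2, ho3, hoflip⟩ := cross_face hP hs'F hcard' hnb htF hsub'
    rw [Function.iterate_succ_apply', gStep_fst, gStep_snd_not_boundary hnb]
    refine ⟨hs'F, hcard', ho1, ho2, ?_, ?_⟩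
    · rw [hsum', hsum, stepsVec_succ, hdir, add_assoc]
    · rw [hlab']
      by_cases hup : isUpFace f ((gStep F f)^[m] (b, faceOf F b)).2
      · rw [if_pos hup] at hdir
        have hno : ¬ isUpFace f (otherFace F
            (exitEdge f ((gStep F f)^[m] (b, faceOf F b)).2
              ((gStep F f)^[m] (b, faceOf F b)).1) ((gStep F f)^[m] (b, faceOf F b)).2) :=
          fun h => (hoflip.mp h) hup
        rw [if_pos hup, if_neg hno, ← hdir]
        ring
      · rw [if_neg hup] at hdir
        have hyes : isUpFace f (otherFace F
            (exitEdge f ((gStep F f)^[m] (b, faceOf F b)).2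
              ((gStep F f)^[m] (b, faceOf F b)).1) ((gStep F f)^[m] (b, faceOf F b)).2) :=
          hoflip.mpr hup
        rw [if_neg hup, if_pos hyes, ← hdir]
        have : ∀ a : ZMod 3, a + 1 + 1 = a + 2 := by decide
        exact this _

lemma beam_final {F : Finset (Finset (Fin n))} {f : Fin n → GridV} (hP : IsGGP n F f)
    {b : Finset (Fin n)} (hb : isBoundaryEdge F b) {k : ℕ} (hk : 0 < k)
    (hmin : ∀ m, 0 < m → m < k → ¬ isBoundaryEdge F (((gStep F f)^[m] (b, faceOf F b)).1)) :
    (∑ u ∈ ((gStep F f)^[k] (b, faceOf F b)).1, f u) =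
      (∑ u ∈ b, f u) + stepsVec k (cwDirUp (dirIdx F f b)) ∧
    (isBoundaryEdge F (((gStep F f)^[k] (b, faceOf F b)).1) →
      ∃ e : ZMod 3, (e = 1 ∨ e = 2) ∧
        dirIdx F f (((gStep F f)^[k] (b, faceOf F b)).1) = dirIdx F f b - e) := by
  obtain ⟨m, rfl⟩ : ∃ m, k = m + 1 := ⟨k - 1, by omega⟩
  obtain ⟨hsF, hs2, htF, hst, hsum, hdir⟩ :=
    beam_inv hP hb m (fun j h1 h2 => hmin j h1 (by omega))
  obtain ⟨⟨hsub', hcard', hne', hlab', hsum'⟩, -⟩ := face_step hP htF hst hs2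
  rw [Function.iterate_succ_apply', gStep_fst]
  constructor
  · rw [hsum', hsum, stepsVec_succ, hdir, add_assoc]
  · intro hbd
    have hface : faceOf F (exitEdge f ((gStep F f)^[m] (b, faceOf F b)).2
        ((gStep F f)^[m] (b, faceOf F b)).1) = ((gStep F f)^[m] (b, faceOf F b)).2 :=
      faceOf_boundary hbd htF hsub'
    unfold dirIdx
    unfold dirIdx at hdir
    rw [hface, hlab']
    by_cases hup : isUpFace f ((gStep F f)^[m] (b, faceOf F b)).2
    · rw [if_pos hup] at hdir
      rw [if_pos hup, if_pos hup, ← hdir]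
      exact ⟨1, Or.inl rfl, by ring⟩
    · rw [if_neg hup] at hdir
      rw [if_neg hup, if_neg hup, ← hdir]
      refine ⟨2, Or.inr rfl, ?_⟩
      have : ∀ a : ZMod 3, a + 1 + 2 = a + 2 - 2 := by decide
      exact this _

lemma self_contra {k : ℕ} (hk : 0 < k) {A : ZMod 3}
    (h : stepsVec k (cwDirUp A) = 0) : False := by
  have hA : ∀ x : ZMod 3, x = 0 ∨ x = 1 ∨ x = 2 := by decide
  have c0 : cwDirUp 0 = ((-1 : ℤ), (0 : ℤ)) := by decide
  have c1 : cwDirUp 1 = ((0 : ℤ), (1 : ℤ)) := by decide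
  have c2 : cwDirUp 2 = ((1 : ℤ), (-1 : ℤ)) := by decide
  rcases hA A with rfl | rfl | rfl <;>
    rw [Prod.ext_iff] at h <;>
    simp only [c0, c1, c2, stepsVec, Prod.fst_zero, Prod.snd_zero] at h <;>
    omega

lemma combine_contra {k k' : ℕ} (hk : 0 < k) (hk' : 0 < k') {A e : ZMod 3}
    (he : e = 1 ∨ e = 2)
    (h : stepsVec k (cwDirUp A) + stepsVec k' (cwDirUp (A - e)) = 0) : False := by
  have hA : ∀ x : ZMod 3, x = 0 ∨ x = 1 ∨ x = 2 := by decide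
  have c0 : cwDirUp 0 = ((-1 : ℤ), (0 : ℤ)) := by decide
  have c1 : cwDirUp 1 = ((0 : ℤ), (1 : ℤ)) := by decide
  have c2 : cwDirUp 2 = ((1 : ℤ), (-1 : ℤ)) := by decide
  have s01 : (0 : ZMod 3) - 1 = 2 := by decide
  have s11 : (1 : ZMod 3) - 1 = 0 := by decide
  have s21 : (2 : ZMod 3) - 1 = 1 := by decide
  have s02 : (0 : ZMod 3) - 2 = 1 := by decide
  have s12 : (1 : ZMod 3) - 2 = 2 := by decide
  have s22 : (2 : ZMod 3) - 2 = 0 := by decide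
  rcases he with rfl | rfl <;> rcases hA A with rfl | rfl | rfl <;>
    rw [Prod.ext_iff] at h <;>
    simp only [s01, s11, s21, s02, s12, s22, c0, c1, c2, stepsVec,
      Prod.fst_add, Prod.snd_add, Prod.fst_zero, Prod.snd_zero] at h <;>
    omega

end Aux

/-- **Theorem.**  The billiards permutation of a generalized grid polygon has no fixed points
and no 2-cycles: every cycle has length at least 3. -/
theorem billiards_no_short_cycles
    (n : ℕ) (F : Finset (Finset (Fin n))) (f : Fin n → GridV) (hP : IsGGP n F f)
    (π : Equiv.Perm ↥(boundaryEdges F)) (hπ : gIsBilliards F f π)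
    (b : ↥(boundaryEdges F)) :
    π b ≠ b ∧ π (π b) ≠ b := by
  have hbE : isBoundaryEdge F b.1 := (Finset.mem_filter.mp b.2).2
  have h1 : π b ≠ b := by
    intro hfix
    have hbt := hπ b
    rw [hfix] at hbt
    obtain ⟨k, hk, hbd, hk1, hmin⟩ := hbt
    have hfin := (beam_final hP hbE hk hmin).1
    rw [hk1] at hfin
    exact self_contra hk (left_eq_add.mp hfin)
  refine ⟨h1, ?_⟩
  intro h2
  have hbE' : isBoundaryEdge F (π b).1 := (Finset.mem_filter.mp (π b).2).2
  obtain ⟨k, hk, hbd, hk1, hmin⟩ := hπ b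
  have hbt' := hπ (π b)
  rw [h2] at hbt'
  obtain ⟨k', hk', hbd', hk1', hmin'⟩ := hbt'
  obtain ⟨hfin, hdir⟩ := beam_final hP hbE hk hmin
  obtain ⟨hfin', -⟩ := beam_final hP hbE' hk' hmin'
  rw [hk1] at hfin hdir
  rw [hk1'] at hfin'
  obtain ⟨e, he, hde⟩ := hdir hbE'
  rw [hde, hfin, add_assoc] at hfin'
  exact combine_contra hk hk' he (left_eq_add.mp hfin')

end
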